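/- The set F is path-connected. -/

import Mathlib

noncomputable section

open scoped Classical
open MeasureTheory

namespace Hilbert

/-- `k₀ = 2` if `k ≡ 1 (mod 4)` and `k₀ = 1` otherwise. -/
def k0 (k : ℕ) : ℝ := if k % 4 = 1 then 2 else 1

/-- `ω = (1 + √k)/k₀`. -/
def omg (k : ℕ) : ℝ := (1 + Real.sqrt k) / k0 k

/-- `ω' = (1 - √k)/k₀`, the algebraic conjugate of `ω`. -/
def omg' (k : ℕ) : ℝ := (1 - Real.sqrt k) / k0 k

/-- The ring `R = ℤ[ω]`, realized inside `ℝ × ℝ` via the pair of real embeddings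
`α ↦ (α, α')` of `K = ℚ(√k)`. -/
def R (k : ℕ) : Subring (ℝ × ℝ) := Subring.closure {(omg k, omg' k)}

/-- The ambient space `ℝ⁴`, with coordinates `(x₁, x₂, y₁, y₂)`. -/
abbrev Pt : Type := ℝ × ℝ × ℝ × ℝ

def x1 (p : Pt) : ℝ := p.1
def x2 (p : Pt) : ℝ := p.2.1
def y1 (p : Pt) : ℝ := p.2.2.1
def y2 (p : Pt) : ℝ := p.2.2.2

/-- `H² × H²`, identified with an open subset of `ℝ⁴`. -/
def HH : Set Pt := {p | 0 < y1 p ∧ 0 < y2 p}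

/-- The coordinate `s₁`, determined by `x₁ = s₁ + s₂ ω`, `x₂ = s₁ + s₂ ω'`. -/
def s1 (k : ℕ) (p : Pt) : ℝ := (omg' k * x1 p - omg k * x2 p) / (omg' k - omg k)

/-- The coordinate `s₂`. -/
def s2 (k : ℕ) (p : Pt) : ℝ := (x1 p - x2 p) / (omg k - omg' k)

/-- The ratio `r = y₁/y₂`. -/
def rr (p : Pt) : ℝ := y1 p / y2 p

/-- The height `h = y₁ y₂`. -/
def hh (p : Pt) : ℝ := y1 p * y2 p

/-- `‖cZ+d‖ = ((cx₁+d)² + c²y₁²)((c'x₂+d')² + c'²y₂²)`, where `c = (c, c')`, `d = (d, d')`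
are given by their two real embeddings. -/
def HNorm (c d : ℝ × ℝ) (p : Pt) : ℝ :=
  ((c.1 * x1 p + d.1) ^ 2 + c.1 ^ 2 * y1 p ^ 2) *
    ((c.2 * x2 p + d.2) ^ 2 + c.2 ^ 2 * y2 p ^ 2)

/-- `S = {(c,d) ∈ R² : cR + dR = R}`. -/
def Spairs (k : ℕ) : Set (R k × R k) := {cd | Ideal.span {cd.1, cd.2} = ⊤}

/-- `V_{c,d}^≥ = {Z ∈ H²×H² : ‖cZ+d‖ ≥ 1}`. -/
def Vge (k : ℕ) (cd : R k × R k) : Set Pt :=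
  {p ∈ HH | 1 ≤ HNorm (cd.1 : ℝ × ℝ) (cd.2 : ℝ × ℝ) p}

/-- `V_{c,d}^≤ = {Z ∈ H²×H² : ‖cZ+d‖ ≤ 1}`. -/
def Vle (k : ℕ) (cd : R k × R k) : Set Pt :=
  {p ∈ HH | HNorm (cd.1 : ℝ × ℝ) (cd.2 : ℝ × ℝ) p ≤ 1}

/-- `V_{c,d} = {Z ∈ H²×H² : ‖cZ+d‖ = 1}`. -/
def Veq (k : ℕ) (cd : R k × R k) : Set Pt :=
  {p ∈ HH | HNorm (cd.1 : ℝ × ℝ) (cd.2 : ℝ × ℝ) p = 1}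

/-- `F₀ = {Z ∈ H²×H² : ‖cZ+d‖ ≥ 1 for all (c,d) ∈ S}`. -/
def F0 (k : ℕ) : Set Pt :=
  {p ∈ HH | ∀ cd ∈ Spairs k, 1 ≤ HNorm (cd.1 : ℝ × ℝ) (cd.2 : ℝ × ℝ) p}

/-- `F_∞ = {(s₁,s₂,r,h) : |s₁| ≤ 1/2, |s₂| ≤ 1/2, ε₀⁻² ≤ r ≤ ε₀²}`, where `ε` stands
for the fundamental unit `ε₀`. -/
def FInf (k : ℕ) (ε : ℝ) : Set Pt :=
  {p ∈ HH | |s1 k p| ≤ 1 / 2 ∧ |s2 k p| ≤ 1 / 2 ∧ (ε ^ 2)⁻¹ ≤ rr p ∧ rr p ≤ ε ^ 2}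

/-- `F = F_∞ ∩ F₀`. -/
def F (k : ℕ) (ε : ℝ) : Set Pt := FInf k ε ∩ F0 k

/-- `SL₂(R)`. -/
abbrev SL (k : ℕ) := Matrix.SpecialLinearGroup (Fin 2) (R k)

/-- Möbius action on the upper half-plane: image of `x + y i` under `(a b; c d)`. -/
def moeb (a b c d x y : ℝ) : ℝ × ℝ :=
  (((a * x + b) * (c * x + d) + a * c * y ^ 2) / ((c * x + d) ^ 2 + c ^ 2 * y ^ 2),
    y / ((c * x + d) ^ 2 + c ^ 2 * y ^ 2))

/-- The action of `γ ∈ SL₂(R)` on `H²×H²`: `γ` acts on the first factor through the first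
embedding and through the conjugate matrix `γ'` (second embedding) on the second factor.
This descends to the Hilbert modular group `PSL₂(R)`. -/
def act (k : ℕ) (g : SL k) (p : Pt) : Pt :=
  ((moeb (g.1 0 0 : ℝ × ℝ).1 (g.1 0 1 : ℝ × ℝ).1 (g.1 1 0 : ℝ × ℝ).1 (g.1 1 1 : ℝ × ℝ).1
      (x1 p) (y1 p)).1,
   (moeb (g.1 0 0 : ℝ × ℝ).2 (g.1 0 1 : ℝ × ℝ).2 (g.1 1 0 : ℝ × ℝ).2 (g.1 1 1 : ℝ × ℝ).2
      (x2 p) (y2 p)).1,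
   (moeb (g.1 0 0 : ℝ × ℝ).1 (g.1 0 1 : ℝ × ℝ).1 (g.1 1 0 : ℝ × ℝ).1 (g.1 1 1 : ℝ × ℝ).1
      (x1 p) (y1 p)).2,
   (moeb (g.1 0 0 : ℝ × ℝ).2 (g.1 0 1 : ℝ × ℝ).2 (g.1 1 0 : ℝ × ℝ).2 (g.1 1 1 : ℝ × ℝ).2
      (x2 p) (y2 p)).2)

/-- The pair of real embeddings of a unit of `R`. -/
def unitVal (k : ℕ) (u : (R k)ˣ) : ℝ × ℝ := ((u : R k) : ℝ × ℝ)

/-- `e` is the fundamental unit of `R`: the smallest unit of `R` greater than `1`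
(with respect to the first embedding). -/
def IsFundUnit (k : ℕ) (e : (R k)ˣ) : Prop :=
  1 < (unitVal k e).1 ∧
    ∀ v : (R k)ˣ, 1 < (unitVal k v).1 → (unitVal k e).1 ≤ (unitVal k v).1

/-- The real number `ε₀ > 1`, the fundamental unit under the first embedding. -/
def eps (k : ℕ) (e : (R k)ˣ) : ℝ := (unitVal k e).1


/-- The norm `N(c) = c c'` of an element of `R` (as a real number). -/
def Nm (k : ℕ) (c : R k) : ℝ := ((c : ℝ × ℝ)).1 * ((c : ℝ × ℝ)).2

/-- A subset `C` of `H²×H²` is hyperbolically bounded if it is bounded in the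
Euclidean metric and `y₁, y₂ > ε` on `C` for some `ε > 0`. -/
def HypBounded (C : Set Pt) : Prop :=
  C ⊆ HH ∧ Bornology.IsBounded C ∧ ∃ ε > (0 : ℝ), ∀ p ∈ C, ε < y1 p ∧ ε < y2 p

/-- `V_{C,μ} = {(c,d) ∈ R × R : ‖cZ+d‖ ≤ μ for some Z ∈ C}`. -/
def VCmu (k : ℕ) (C : Set Pt) (μ : ℝ) : Set (R k × R k) :=
  {cd | ∃ p ∈ C, HNorm (cd.1 : ℝ × ℝ) (cd.2 : ℝ × ℝ) p ≤ μ}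

/-- The conditions (8) of Theorem `FiniteSides` on a pair `(c,d) ∈ R²`. -/
def SCond (k : ℕ) (ε : ℝ) (cd : R k × R k) : Prop :=
  cd.1 ≠ 0 ∧ Ideal.span {cd.1, cd.2} = ⊤ ∧
    |Nm k cd.1| ≤ 2 * k / (k0 k) ^ 2 ∧
    |((cd.2 : ℝ × ℝ)).1 / ((cd.1 : ℝ × ℝ)).1| <
      ε * Real.sqrt (2 * k / (Nm k cd.1 ^ 2 * (k0 k) ^ 2) - (k0 k) ^ 2 / (2 * k)) +
        (1 + omg k) / 2 ∧
    |((cd.2 : ℝ × ℝ)).2 / ((cd.1 : ℝ × ℝ)).2| <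
      ε * Real.sqrt (2 * k / (Nm k cd.1 ^ 2 * (k0 k) ^ 2) - (k0 k) ^ 2 / (2 * k)) +
        (1 - omg' k) / 2

/-- `S₁` is a set of representatives, up to multiplication by units of `R`, of the pairs
`(c,d) ∈ R²` satisfying the conditions `SCond`. -/
def IsRepSet (k : ℕ) (ε : ℝ) (S1 : Set (R k × R k)) : Prop :=
  (∀ cd ∈ S1, SCond k ε cd) ∧
    (∀ cd : R k × R k, SCond k ε cd →
      ∃ ab ∈ S1, ∃ u : (R k)ˣ, cd.1 = (u : R k) * ab.1 ∧ cd.2 = (u : R k) * ab.2) ∧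
    (∀ ab ∈ S1, ∀ ab' ∈ S1,
      (∃ u : (R k)ˣ, ab'.1 = (u : R k) * ab.1 ∧ ab'.2 = (u : R k) * ab.2) → ab = ab')

/-- The family `𝒱_∞ = {V_i^± : i = 1,2,3}`. -/
def VfamInf (k : ℕ) (ε : ℝ) : Set (Set Pt) :=
  { {p ∈ HH | s1 k p = 1 / 2}, {p ∈ HH | s1 k p = -(1 / 2)},
    {p ∈ HH | s2 k p = 1 / 2}, {p ∈ HH | s2 k p = -(1 / 2)},
    {p ∈ HH | rr p = ε ^ 2}, {p ∈ HH | rr p = (ε ^ 2)⁻¹} }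

/-- The family `𝒱 = {V_{c,d} : (c,d) ∈ S, c ≠ 0}`. -/
def Vfam (k : ℕ) : Set (Set Pt) :=
  {V | ∃ cd ∈ Spairs k, cd.1 ≠ 0 ∧ V = Veq k cd}

/-- The family `𝓜 = {γ(M) : γ ∈ Γ, M ∈ 𝒱 ∪ 𝒱_∞}`. -/
def Mfam (k : ℕ) (ε : ℝ) : Set (Set Pt) :=
  {M | ∃ g : SL k, ∃ V ∈ Vfam k ∪ VfamInf k ε, M = act k g '' V}

/-- `ω` as an element of `R`. -/
def omR (k : ℕ) : R k := ⟨(omg k, omg' k), Subring.subset_closure rfl⟩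

/-- The side-pairing transformations: `γ ≠ 1` (in `PSL₂(R)`) such that `F ∩ γ⁻¹(F)` has
Hausdorff dimension `3`. -/
def SidePairings (k : ℕ) (ε : ℝ) : Set (SL k) :=
  {g | g ≠ 1 ∧ g.1 ≠ -1 ∧ dimH (F k ε ∩ act k g⁻¹ '' F k ε) = 3}


/-! ### Auxiliary lemmas for path-connectedness -/

section Aux

variable {k : ℕ}

/-- Integer trace of `ω`. -/
def tZ (k : ℕ) : ℤ := if k % 4 = 1 then 1 else 2

/-- Integer norm of `ω`. -/
def nZ (k : ℕ) : ℤ := if k % 4 = 1 then (1 - (k : ℤ)) / 4 else 1 - (k : ℤ)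

lemma k0_cases (k : ℕ) : k0 k = 1 ∨ k0 k = 2 := by
  unfold k0; split <;> simp

lemma k0_pos (k : ℕ) : 0 < k0 k := by
  rcases k0_cases k with h | h <;> rw [h] <;> norm_num

lemma omg_add (k : ℕ) : omg k + omg' k = (tZ k : ℝ) := by
  unfold omg omg' k0 tZ
  split <;> push_cast <;> ring

lemma omg_mul (k : ℕ) : omg k * omg' k = (nZ k : ℝ) := by
  have hs : Real.sqrt k * Real.sqrt k = (k : ℝ) := Real.mul_self_sqrt (Nat.cast_nonneg k)
  unfold omg omg' k0 nZ
  split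
  · rename_i h
    obtain ⟨m, hm⟩ : (4 : ℤ) ∣ 1 - (k : ℤ) := by omega
    have h4 : ((1 : ℝ) - k) = 4 * m := by exact_mod_cast hm
    rw [hm, Int.mul_ediv_cancel_left _ (by norm_num)]
    push_cast
    linear_combination (-(1/4 : ℝ)) * hs + (1/4 : ℝ) * h4
  · push_cast
    linear_combination (-1 : ℝ) * hs

lemma omg_sq (k : ℕ) : omg k ^ 2 = (tZ k : ℝ) * omg k - (nZ k : ℝ) := by
  linear_combination omg k * omg_add k - omg_mul k

lemma omg'_sq (k : ℕ) : omg' k ^ 2 = (tZ k : ℝ) * omg' k - (nZ k : ℝ) := by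
  linear_combination omg' k * omg_add k - omg_mul k

/-- The lattice `ℤ + ℤω` as a subring of `ℝ × ℝ`. -/
def Lam (k : ℕ) : Subring (ℝ × ℝ) where
  carrier := {p | ∃ a b : ℤ, p = ((a : ℝ) + b * omg k, (a : ℝ) + b * omg' k)}
  zero_mem' := ⟨0, 0, by norm_num [Prod.ext_iff]⟩
  one_mem' := ⟨1, 0, by norm_num [Prod.ext_iff]⟩
  add_mem' := by
    rintro p q ⟨a, b, rfl⟩ ⟨c, d, rfl⟩
    exact ⟨a + c, b + d, by rw [Prod.ext_iff]; constructor <;> · simp; push_cast; ring⟩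
  neg_mem' := by
    rintro p ⟨a, b, rfl⟩
    exact ⟨-a, -b, by rw [Prod.ext_iff]; constructor <;> · simp; push_cast; ring⟩
  mul_mem' := by
    rintro p q ⟨a, b, rfl⟩ ⟨c, d, rfl⟩
    refine ⟨a * c - nZ k * (b * d), a * d + b * c + tZ k * (b * d), ?_⟩
    rw [Prod.ext_iff]
    constructor
    · show ((a : ℝ) + b * omg k) * ((c : ℝ) + d * omg k) = _
      push_cast
      linear_combination (b * d : ℝ) * omg_sq k
    · show ((a : ℝ) + b * omg' k) * ((c : ℝ) + d * omg' k) = _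
      push_cast
      linear_combination (b * d : ℝ) * omg'_sq k

lemma R_le_Lam (k : ℕ) : R k ≤ Lam k :=
  Subring.closure_le.mpr (Set.singleton_subset_iff.mpr ⟨0, 1, by norm_num⟩)

lemma sqrt_irrational (hk : Squarefree k) (hk1 : 1 < k) : Irrational (Real.sqrt k) := by
  rw [irrational_sqrt_natCast_iff]
  rintro ⟨m, hm⟩
  have hu := hk m (by rw [hm])
  rw [Nat.isUnit_iff] at hu
  rw [hu] at hm
  omega

lemma factor_ne_zero (hk : Squarefree k) (hk1 : 1 < k) {a b : ℤ}
    (hab : ¬(a = 0 ∧ b = 0)) :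
    (a : ℝ) + b * omg k ≠ 0 ∧ (a : ℝ) + b * omg' k ≠ 0 := by
  have hirr := sqrt_irrational hk hk1
  by_cases hb : b = 0
  · subst hb
    have ha : a ≠ 0 := by tauto
    have ha' : (a : ℝ) ≠ 0 := Int.cast_ne_zero.mpr ha
    constructor <;> · intro h; apply ha'; simpa using h
  · have hb' : (b : ℝ) ≠ 0 := Int.cast_ne_zero.mpr hb
    constructor
    · intro h
      rcases k0_cases k with hc | hc <;>
      · unfold omg at h
        rw [hc] at h
        refine hirr ?_
        first
        | exact ⟨(-(a : ℚ) - b) / b, by push_cast; rw [div_eq_iff hb']; nlinarith [h]⟩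
        | exact ⟨(-2 * (a : ℚ) - b) / b, by push_cast; rw [div_eq_iff hb']; nlinarith [h]⟩
    · intro h
      rcases k0_cases k with hc | hc <;>
      · unfold omg' at h
        rw [hc] at h
        refine hirr ?_
        first
        | exact ⟨((a : ℚ) + b) / b, by push_cast; rw [div_eq_iff hb']; nlinarith [h]⟩
        | exact ⟨(2 * (a : ℚ) + b) / b, by push_cast; rw [div_eq_iff hb']; nlinarith [h]⟩

/-- Norm lower bound: nonzero elements of `R` have `|N(c)| ≥ 1`. -/
lemma one_le_nm_sq (hk : Squarefree k) (hk1 : 1 < k) (c : R k)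
    (hc : ((c : ℝ × ℝ)) ≠ 0) :
    1 ≤ (((c : ℝ × ℝ)).1 * ((c : ℝ × ℝ)).2) ^ 2 := by
  obtain ⟨a, b, hab⟩ := R_le_Lam k c.2
  set m : ℤ := a ^ 2 + tZ k * (a * b) + nZ k * b ^ 2 with hmdef
  have hm : ((c : ℝ × ℝ)).1 * ((c : ℝ × ℝ)).2 = (m : ℝ) := by
    rw [hab]
    show ((a : ℝ) + b * omg k) * ((a : ℝ) + b * omg' k) = _
    rw [hmdef]
    push_cast
    linear_combination ((a : ℝ) * b) * omg_add k + ((b : ℝ) ^ 2) * omg_mul k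
  have hm0 : m ≠ 0 := by
    intro h0
    have hz : ((a : ℝ) + b * omg k) * ((a : ℝ) + b * omg' k) = 0 := by
      have h := hm
      rw [hab, h0] at h
      simpa using h
    have hab0 : ¬(a = 0 ∧ b = 0) := by
      rintro ⟨rfl, rfl⟩
      exact hc (by rw [hab]; norm_num)
    rcases mul_eq_zero.mp hz with h | h
    · exact (factor_ne_zero hk hk1 hab0).1 h
    · exact (factor_ne_zero hk hk1 hab0).2 h
  have h1 : 1 ≤ m ^ 2 := by rcases lt_or_gt_of_ne hm0 with h | h <;> nlinarith
  rw [hm]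
  exact_mod_cast h1

end Aux

section Geo

variable {k : ℕ} {ε : ℝ}

/-- The convex "top" region: a box in `(s₁, s₂)`, linear bounds giving the `r`-range,
and the convex region `y₁y₂ ≥ 1`. -/
def Tset (k : ℕ) (ε : ℝ) : Set Pt :=
  {p | 0 < y1 p ∧ 0 < y2 p ∧ |s1 k p| ≤ 1 / 2 ∧ |s2 k p| ≤ 1 / 2 ∧
    y1 p ≤ ε ^ 2 * y2 p ∧ y2 p ≤ ε ^ 2 * y1 p ∧ 1 ≤ y1 p * y2 p}

lemma cvx_pos {u v a b : ℝ} (hu : 0 < u) (hv : 0 < v) (ha : 0 ≤ a) (hb : 0 ≤ b)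
    (hab : a + b = 1) : 0 < a * u + b * v := by
  rcases ha.eq_or_lt with h | h
  · have hb1 : b = 1 := by linarith
    simp [← h, hb1, hv]
  · nlinarith

lemma two_le_add {x y : ℝ} (hx : 0 < x) (hy : 0 < y) (h : 1 ≤ x * y) : 2 ≤ x + y := by
  nlinarith [sq_nonneg (x - y), mul_pos hx hy]

lemma one_le_cvx_mul {u1 u2 v1 v2 a b : ℝ} (hu1 : 0 < u1) (hu2 : 0 < u2) (hv1 : 0 < v1)
    (hv2 : 0 < v2) (hu : 1 ≤ u1 * u2) (hv : 1 ≤ v1 * v2) (ha : 0 ≤ a) (hb : 0 ≤ b)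
    (hab : a + b = 1) : 1 ≤ (a * u1 + b * v1) * (a * u2 + b * v2) := by
  have h2 : 2 ≤ u1 * v2 + u2 * v1 := by
    refine two_le_add (mul_pos hu1 hv2) (mul_pos hu2 hv1) ?_
    nlinarith [mul_le_mul hu hv (by norm_num) (by positivity)]
  nlinarith [mul_nonneg (mul_nonneg ha hb) (by linarith : (0:ℝ) ≤ u1 * v2 + u2 * v1 - 2),
    mul_nonneg (mul_nonneg ha ha) (by linarith : (0:ℝ) ≤ u1 * u2 - 1),
    mul_nonneg (mul_nonneg hb hb) (by linarith : (0:ℝ) ≤ v1 * v2 - 1)]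

lemma y1_combo (a b : ℝ) (p q : Pt) : y1 (a • p + b • q) = a * y1 p + b * y1 q := by
  simp [y1, Prod.smul_snd, Prod.smul_fst, Prod.fst_add, Prod.snd_add, smul_eq_mul]

lemma y2_combo (a b : ℝ) (p q : Pt) : y2 (a • p + b • q) = a * y2 p + b * y2 q := by
  simp [y2, Prod.smul_snd, Prod.smul_fst, Prod.fst_add, Prod.snd_add, smul_eq_mul]

lemma x1_combo (a b : ℝ) (p q : Pt) : x1 (a • p + b • q) = a * x1 p + b * x1 q := by
  simp [x1, Prod.smul_fst, Prod.fst_add, smul_eq_mul]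

lemma x2_combo (a b : ℝ) (p q : Pt) : x2 (a • p + b • q) = a * x2 p + b * x2 q := by
  simp [x2, Prod.smul_snd, Prod.smul_fst, Prod.fst_add, Prod.snd_add, smul_eq_mul]

lemma s1_combo (a b : ℝ) (p q : Pt) : s1 k (a • p + b • q) = a * s1 k p + b * s1 k q := by
  simp only [s1, x1_combo, x2_combo]
  ring

lemma s2_combo (a b : ℝ) (p q : Pt) : s2 k (a • p + b • q) = a * s2 k p + b * s2 k q := by
  simp only [s2, x1_combo, x2_combo]
  ring

lemma convex_Tset (k : ℕ) (ε : ℝ) : Convex ℝ (Tset k ε) := by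
  rintro p ⟨p1, p2, p3, p4, p5, p6, p7⟩ q ⟨q1, q2, q3, q4, q5, q6, q7⟩ a b ha hb hab
  refine ⟨?_, ?_, ?_, ?_, ?_, ?_, ?_⟩
  · rw [y1_combo]; exact cvx_pos p1 q1 ha hb hab
  · rw [y2_combo]; exact cvx_pos p2 q2 ha hb hab
  · rw [s1_combo]
    calc |a * s1 k p + b * s1 k q| ≤ |a * s1 k p| + |b * s1 k q| := abs_add_le _ _
      _ = a * |s1 k p| + b * |s1 k q| := by
          rw [abs_mul, abs_mul, abs_of_nonneg ha, abs_of_nonneg hb]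
      _ ≤ a * (1 / 2) + b * (1 / 2) := by
          gcongr
      _ = 1 / 2 := by linarith
  · rw [s2_combo]
    calc |a * s2 k p + b * s2 k q| ≤ |a * s2 k p| + |b * s2 k q| := abs_add_le _ _
      _ = a * |s2 k p| + b * |s2 k q| := by
          rw [abs_mul, abs_mul, abs_of_nonneg ha, abs_of_nonneg hb]
      _ ≤ a * (1 / 2) + b * (1 / 2) := by
          gcongr
      _ = 1 / 2 := by linarith
  · rw [y1_combo, y2_combo]
    nlinarith [mul_le_mul_of_nonneg_left p5 ha, mul_le_mul_of_nonneg_left q5 hb]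
  · rw [y1_combo, y2_combo]
    nlinarith [mul_le_mul_of_nonneg_left p6 ha, mul_le_mul_of_nonneg_left q6 hb]
  · rw [y1_combo, y2_combo]
    exact one_le_cvx_mul p1 p2 q1 q2 p7 q7 ha hb hab

lemma Tset_subset_F (hk : Squarefree k) (hk1 : 1 < k) (hε : 1 < ε) :
    Tset k ε ⊆ F k ε := by
  rintro p ⟨h1, h2, h3, h4, h5, h6, h7⟩
  have hε2 : (0:ℝ) < ε ^ 2 := by positivity
  have hHH : p ∈ HH := ⟨h1, h2⟩
  refine ⟨⟨hHH, h3, h4, ?_, ?_⟩, hHH, ?_⟩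
  · rw [rr, le_div_iff₀ h2]
    rw [inv_mul_le_iff₀ hε2]
    exact h6
  · rw [rr, div_le_iff₀ h2]
    exact h5
  · rintro ⟨c, d⟩ hcd
    by_cases hc : ((c : ℝ × ℝ)) = 0
    · have hc0 : c = 0 := by exact_mod_cast hc
      have hd : ((d : ℝ × ℝ)) ≠ 0 := by
        intro hd0
        have hd0' : d = 0 := by exact_mod_cast hd0
        have h1' : (1 : R k) ∈ Ideal.span ({c, d} : Set (R k)) := hcd ▸ trivial
        rw [Ideal.mem_span_pair] at h1'
        obtain ⟨u, v, huv⟩ := h1'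
        rw [hc0, hd0'] at huv
        simp at huv
      have hnm := one_le_nm_sq hk hk1 d hd
      simp only [HNorm, hc, Prod.fst_zero, Prod.snd_zero]
      ring_nf
      nlinarith [hnm, sq_nonneg (((d : ℝ × ℝ)).1), sq_nonneg (((d : ℝ × ℝ)).2)]
    · have hnm := one_le_nm_sq hk hk1 c hc
      set c1 := ((c : ℝ × ℝ)).1
      set c2 := ((c : ℝ × ℝ)).2
      set d1 := ((d : ℝ × ℝ)).1
      set d2 := ((d : ℝ × ℝ)).2
      have key : (c1 ^ 2 * y1 p ^ 2) * (c2 ^ 2 * y2 p ^ 2) ≤ HNorm (c1, c2) (d1, d2) p := by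
        unfold HNorm
        refine mul_le_mul ?_ ?_ (by positivity) (by positivity)
        · nlinarith [sq_nonneg (c1 * x1 p + d1)]
        · nlinarith [sq_nonneg (c2 * x2 p + d2)]
      have h2' : 1 ≤ (y1 p * y2 p) ^ 2 := by nlinarith
      calc (1:ℝ) = 1 * 1 := by ring
        _ ≤ (c1 * c2) ^ 2 * (y1 p * y2 p) ^ 2 :=
            mul_le_mul hnm h2' (by norm_num) (by positivity)
        _ = (c1 ^ 2 * y1 p ^ 2) * (c2 ^ 2 * y2 p ^ 2) := by ring
        _ ≤ _ := key

/-- Vertical scaling of a point. -/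
def Scale (t : ℝ) (p : Pt) : Pt := (x1 p, x2 p, t * y1 p, t * y2 p)

lemma scale_mem_F {q : Pt} {t : ℝ} (hq : q ∈ F k ε) (ht : 1 ≤ t) :
    Scale t q ∈ F k ε := by
  obtain ⟨⟨⟨hy1, hy2⟩, hs1, hs2, hr1, hr2⟩, _, hF0⟩ := hq
  have ht0 : (0:ℝ) < t := by linarith
  have hHH' : Scale t q ∈ HH := ⟨mul_pos ht0 hy1, mul_pos ht0 hy2⟩
  have hrr : rr (Scale t q) = rr q := by
    show (t * y1 q) / (t * y2 q) = _
    rw [mul_div_mul_left _ _ (ne_of_gt ht0)]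
    rfl
  refine ⟨⟨hHH', hs1, hs2, by rw [hrr]; exact hr1, by rw [hrr]; exact hr2⟩, hHH', ?_⟩
  rintro ⟨c, d⟩ hcd
  have h0 := hF0 ⟨c, d⟩ hcd
  set c1 := ((c : ℝ × ℝ)).1
  set c2 := ((c : ℝ × ℝ)).2
  set d1 := ((d : ℝ × ℝ)).1
  set d2 := ((d : ℝ × ℝ)).2
  have key : HNorm (c1, c2) (d1, d2) q ≤ HNorm (c1, c2) (d1, d2) (Scale t q) := by
    show _ ≤ ((c1 * x1 q + d1) ^ 2 + c1 ^ 2 * (t * y1 q) ^ 2) *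
      ((c2 * x2 q + d2) ^ 2 + c2 ^ 2 * (t * y2 q) ^ 2)
    unfold HNorm
    refine mul_le_mul ?_ ?_ (by positivity) (by positivity)
    · nlinarith [mul_nonneg (mul_nonneg (sq_nonneg c1) (sq_nonneg (y1 q)))
        (by nlinarith : (0:ℝ) ≤ t ^ 2 - 1)]
    · nlinarith [mul_nonneg (mul_nonneg (sq_nonneg c2) (sq_nonneg (y2 q)))
        (by nlinarith : (0:ℝ) ≤ t ^ 2 - 1)]
  exact le_trans h0 key

end Geo

/-- The set `F` is path-connected. -/
theorem F_isPathConnected (k : ℕ) (hk : Squarefree k) (hk1 : 1 < k)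
    (e : (R k)ˣ) (he : IsFundUnit k e) :
    IsPathConnected (F k (eps k e)) := by
  set ε := eps k e with hεdef
  have hε : 1 < ε := he.1
  have hconv := convex_Tset k ε
  have hsub := Tset_subset_F hk hk1 hε
  have hp0 : ((0:ℝ), (0:ℝ), (1:ℝ), (1:ℝ)) ∈ Tset k ε := by
    refine ⟨one_pos, one_pos, ?_, ?_, ?_, ?_, ?_⟩
    · show |s1 k ((0:ℝ), (0:ℝ), (1:ℝ), (1:ℝ))| ≤ 1 / 2
      simp [s1, x1, x2]
    · show |s2 k ((0:ℝ), (0:ℝ), (1:ℝ), (1:ℝ))| ≤ 1 / 2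
      simp [s2, x1, x2]
    · show (1:ℝ) ≤ ε ^ 2 * 1
      nlinarith
    · show (1:ℝ) ≤ ε ^ 2 * 1
      nlinarith
    · show (1:ℝ) ≤ 1 * 1
      norm_num
  refine ⟨_, hsub hp0, @fun q hq => ?_⟩
  have hy1 : 0 < y1 q := hq.1.1.1
  have hy2 : 0 < y2 q := hq.1.1.2
  set T := max 1 (Real.sqrt (y1 q * y2 q))⁻¹ with hT
  have hT1 : (1:ℝ) ≤ T := le_max_left _ _
  have hT0 : (0:ℝ) < T := by linarith
  have hTmem : Scale T q ∈ Tset k ε := by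
    have hs1' : |s1 k q| ≤ 1 / 2 := hq.1.2.1
    have hs2' : |s2 k q| ≤ 1 / 2 := hq.1.2.2.1
    have hr1 := hq.1.2.2.2.1
    have hr2 := hq.1.2.2.2.2
    have hε2 : (0:ℝ) < ε ^ 2 := by positivity
    have h5 : y1 q ≤ ε ^ 2 * y2 q := by rw [rr, div_le_iff₀ hy2] at hr2; exact hr2
    have h6 : y2 q ≤ ε ^ 2 * y1 q := by
      rw [rr, le_div_iff₀ hy2, inv_mul_le_iff₀ hε2] at hr1; exact hr1
    refine ⟨mul_pos hT0 hy1, mul_pos hT0 hy2, hs1', hs2', ?_, ?_, ?_⟩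
    · show T * y1 q ≤ ε ^ 2 * (T * y2 q)
      nlinarith [mul_le_mul_of_nonneg_left h5 hT0.le]
    · show T * y2 q ≤ ε ^ 2 * (T * y1 q)
      nlinarith [mul_le_mul_of_nonneg_left h6 hT0.le]
    · show (1:ℝ) ≤ (T * y1 q) * (T * y2 q)
      set s := Real.sqrt (y1 q * y2 q) with hsdef
      have hs : 0 < s := Real.sqrt_pos.mpr (mul_pos hy1 hy2)
      have hssq : s * s = y1 q * y2 q := Real.mul_self_sqrt (mul_pos hy1 hy2).le
      have hTs : s⁻¹ ≤ T := le_max_right _ _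
      have h1 : 1 ≤ T * s := by
        have := mul_le_mul_of_nonneg_right hTs hs.le
        rwa [inv_mul_cancel₀ (ne_of_gt hs)] at this
      calc (1:ℝ) = 1 * 1 := by ring
        _ ≤ (T * s) * (T * s) := mul_le_mul h1 h1 (by norm_num) (by positivity)
        _ = T * T * (s * s) := by ring
        _ = T * T * (y1 q * y2 q) := by rw [hssq]
        _ = (T * y1 q) * (T * y2 q) := by ring
  have j1 : JoinedIn (F k ε) q (Scale T q) := by
    refine ⟨{ toFun := fun u => Scale (1 + (u : ℝ) * (T - 1)) q,
              continuous_toFun := ?_, source' := ?_, target' := ?_ },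
      fun u => scale_mem_F hq ?_⟩
    · unfold Scale
      fun_prop
    · simp [Scale, x1, x2, y1, y2]
    · norm_num [Scale]
    · have h1 : (0:ℝ) ≤ (u : ℝ) := u.2.1
      nlinarith [h1, hT1]
  have j2 : JoinedIn (Tset k ε) (Scale T q) ((0:ℝ), (0:ℝ), (1:ℝ), (1:ℝ)) :=
    (hconv.isPathConnected ⟨_, hp0⟩).joinedIn _ hTmem _ hp0
  exact (j1.trans (j2.mono hsub)).symm

end Hilbert
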